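/- For all natural numbers a_1, ..., a_k each at most M, and for each natural number S ≥ k(M² − M) which is divisible by gcd(a_1, ..., a_k), there exist nonnegative integers b_1, ..., b_k such that S = a_1·b_1 + ... + a_k·b_k. -/

import Mathlib

/-- Any S ≥ k(M²−M) divisible by gcd(a₁,…,a_k) is a nonnegative combination of the aᵢ. -/
theorem stmt_0 (k M : ℕ) (a : Fin k → ℕ) (ha : ∀ i, a i ≤ M)
    (S : ℕ) (hS : k * (M ^ 2 - M) ≤ S)
    (hdvd : (Finset.univ.gcd a) ∣ S) :
    ∃ b : Fin k → ℕ, S = ∑ i, a i * b i := by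
  induction k generalizing S with
  | zero =>
    refine ⟨0, ?_⟩
    have h0 : (Finset.univ.gcd a) = 0 := by
      simp [Finset.gcd_eq_zero_iff]
    rw [h0] at hdvd
    simp [Nat.eq_zero_of_zero_dvd hdvd]
  | succ n ih =>
    set aL := a (Fin.last n) with haL
    set d' := Finset.univ.gcd (fun i : Fin n => a i.castSucc) with hd'
    have hgd : Nat.gcd d' aL ∣ S := by
      refine dvd_trans ?_ hdvd
      refine Finset.dvd_gcd fun i _ => ?_
      refine Fin.lastCases ?_ (fun j => ?_) i
      · exact Nat.gcd_dvd_right _ _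
      · exact dvd_trans (Nat.gcd_dvd_left _ _)
          (Finset.gcd_dvd (Finset.mem_univ j))
    rcases Nat.eq_zero_or_pos d' with h0 | hpos
    · have hall : ∀ j : Fin n, a j.castSucc = 0 :=
        fun j => (Finset.gcd_eq_zero_iff.mp (hd' ▸ h0)) j (Finset.mem_univ j)
      have haLS : aL ∣ S := by rwa [h0, Nat.gcd_zero_left] at hgd
      refine ⟨Fin.snoc 0 (S / aL), ?_⟩
      rw [Fin.sum_univ_castSucc]
      simp [hall, Fin.snoc, Nat.mul_div_cancel' haLS]
      exact (Nat.mul_div_cancel' haLS).symm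
    · have hne : ∃ j : Fin n, a j.castSucc ≠ 0 := by
        by_contra h
        push_neg at h
        have : d' = 0 := Finset.gcd_eq_zero_iff.mpr fun j _ => h j
        omega
      obtain ⟨j, hj⟩ := hne
      have hd'M : d' ≤ M := le_trans
        (Nat.le_of_dvd (Nat.pos_of_ne_zero hj) (Finset.gcd_dvd (Finset.mem_univ j)))
        (ha _)
      obtain ⟨s, hs⟩ := hgd
      set x := Nat.gcdA aL d' with hx
      set y := Nat.gcdB aL d' with hy
      have hbez : (Nat.gcd aL d' : ℤ) = aL * x + d' * y := Nat.gcd_eq_gcd_ab aL d'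
      have hd'z : (0:ℤ) < (d' : ℤ) := by exact_mod_cast hpos
      set t : ℤ := (x * s) % (d' : ℤ) with ht
      have ht0 : 0 ≤ t := Int.emod_nonneg _ (by omega)
      have htlt : t < (d' : ℤ) := Int.emod_lt_of_pos _ hd'z
      have h1 : (S : ℤ) = (x * s) * aL + (d' : ℤ) * (y * s) := by
        have hS' : (S : ℤ) = (Nat.gcd aL d' : ℤ) * s := by
          rw [Nat.gcd_comm aL d']; exact_mod_cast hs
        rw [hS', hbez]; ring
      have h2 : (d' : ℤ) ∣ x * s - t := ⟨x * s / d', by rw [ht, Int.emod_def]; ring⟩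
      obtain ⟨q, hq⟩ := h2
      have hdvdt : (d' : ℤ) ∣ (S : ℤ) - t * aL :=
        ⟨y * s + q * aL, by linear_combination h1 + (aL : ℤ) * hq⟩
      -- natural number version of t
      set tn := t.toNat with htn
      have htval : (tn : ℤ) = t := Int.toNat_of_nonneg ht0
      have htnlt : tn < d' := by omega
      have hbound : tn * aL ≤ M ^ 2 - M := by
        have h3 : tn ≤ M - 1 := by omega
        have h4 : tn * aL ≤ (M - 1) * M := Nat.mul_le_mul h3 (ha _)
        have hM : 1 ≤ M := by omega
        calc tn * aL ≤ (M - 1) * M := h4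
          _ = M ^ 2 - M := by rw [Nat.sub_mul, one_mul, pow_two]
      have hSle : tn * aL ≤ S := le_trans hbound
        (le_trans (Nat.le_mul_of_pos_left _ (Nat.succ_pos n)) hS)
      have hdvd' : d' ∣ S - tn * aL := by
        have : (d' : ℤ) ∣ ((S - tn * aL : ℕ) : ℤ) := by
          rw [Nat.cast_sub hSle]
          push_cast
          rw [← htval] at hdvdt
          exact hdvdt
        exact_mod_cast this
      have hS'' : n * (M ^ 2 - M) ≤ S - tn * aL := by
        have : (n + 1) * (M ^ 2 - M) = n * (M ^ 2 - M) + (M ^ 2 - M) := by ring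
        omega
      obtain ⟨b', hb'⟩ := ih (fun i => a i.castSucc) (fun i => ha _) (S - tn * aL) hS'' hdvd'
      refine ⟨Fin.snoc b' tn, ?_⟩
      rw [Fin.sum_univ_castSucc]
      have heq : ∀ i : Fin n, a i.castSucc * (Fin.snoc b' tn : Fin (n+1) → ℕ) i.castSucc
          = a i.castSucc * b' i := by intro i; rw [Fin.snoc_castSucc]
      rw [Finset.sum_congr rfl (fun i _ => heq i), ← hb', Fin.snoc_last]
      have hcomm : a (Fin.last n) * tn = tn * aL := by rw [← haL]; ring
      omega
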